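/- If σ is a dyadically linear permutation of ℕ, then for every n, #B_n^σ ≤ 3^n, where B_n^σ = { (k,l) ∈ [0,2^n)² : k+l ∈ [0,2^n) and σ(k) ⊕ σ(l) = σ(k+l) }. -/
import Mathlib

theorem aux_add_eq (k l : ℕ) : k + l = (k ^^^ l) + 2 * (k &&& l) := by
  induction k using Nat.strongRecOn generalizing l with
  | ind k ih =>
    rcases Nat.eq_zero_or_pos k with hk | hk
    · simp [hk]
    · have h2 := ih (k / 2) (Nat.div_lt_self hk one_lt_two) (l / 2)
      have e1 : (k ^^^ l) / 2 = k / 2 ^^^ l / 2 := Nat.xor_div_two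
      have e2 : (k &&& l) / 2 = k / 2 &&& l / 2 := Nat.and_div_two
      have m1 : (k ^^^ l) % 2 = (k + l) % 2 := Nat.xor_mod_two_eq
      have m2 : (k &&& l) % 2 = 1 ↔ (k % 2 = 1 ∧ l % 2 = 1) := by
        rw [Nat.mod_two_eq_one_iff_testBit_zero, Nat.testBit_and,
          Bool.and_eq_true, ← Nat.mod_two_eq_one_iff_testBit_zero,
          ← Nat.mod_two_eq_one_iff_testBit_zero]
      have m2' : (k &&& l) % 2 = 0 ∨ (k &&& l) % 2 = 1 := Nat.mod_two_eq_zero_or_one _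
      have hk2 : k % 2 = 0 ∨ k % 2 = 1 := Nat.mod_two_eq_zero_or_one _
      have hl2 : l % 2 = 0 ∨ l % 2 = 1 := Nat.mod_two_eq_zero_or_one _
      omega

theorem stmt_14 (σ : ℕ → ℕ) (hσ : Function.Bijective σ)
    (hlin : ∀ m n : ℕ, σ (m ^^^ n) = σ m ^^^ σ n) (n : ℕ) :
    ((Finset.range (2 ^ n) ×ˢ Finset.range (2 ^ n)).filter
      (fun p : ℕ × ℕ => p.1 + p.2 < 2 ^ n ∧
        σ p.1 ^^^ σ p.2 = σ (p.1 + p.2))).card ≤ 3 ^ n := by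
  classical
  have key : ∀ p : ℕ × ℕ, p ∈ (Finset.range (2 ^ n) ×ˢ Finset.range (2 ^ n)).filter
      (fun p : ℕ × ℕ => p.1 + p.2 < 2 ^ n ∧ σ p.1 ^^^ σ p.2 = σ (p.1 + p.2)) →
      p.1 &&& p.2 = 0 ∧ p.1 < 2 ^ n ∧ p.2 < 2 ^ n := by
    intro p hp
    simp only [Finset.mem_filter, Finset.mem_product, Finset.mem_range] at hp
    obtain ⟨⟨h1, h2⟩, _, hσeq⟩ := hp
    have hx : p.1 ^^^ p.2 = p.1 + p.2 := hσ.1 (by rw [hlin, hσeq])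
    have := aux_add_eq p.1 p.2
    exact ⟨by omega, h1, h2⟩
  have hcard : (Finset.univ : Finset (Fin n → Fin 3)).card = 3 ^ n := by
    simp [Finset.card_univ]
  rw [← hcard]
  apply Finset.card_le_card_of_injOn
    (fun p : ℕ × ℕ => fun i : Fin n =>
      if p.1.testBit i then 1 else if p.2.testBit i then 2 else (0 : Fin 3))
  · intro p _; exact Finset.mem_univ _
  · intro p hp q hq hfq
    obtain ⟨hd1, hp1, hp2⟩ := key p hp
    obtain ⟨hd2, hq1, hq2⟩ := key q hq
    have bit1 : ∀ i, p.1.testBit i = q.1.testBit i := by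
      intro i
      by_cases hi : i < n
      · have := congrFun hfq ⟨i, hi⟩
        simp only at this
        by_cases a : p.1.testBit i <;> by_cases b : q.1.testBit i <;>
          by_cases c : p.2.testBit i <;> by_cases d : q.2.testBit i <;>
          simp only [a, b, c, d, if_true, if_false, Bool.not_eq_true] at this ⊢ <;>
          first
            | rfl
            | exact absurd this (by decide)
      · rw [Nat.testBit_lt_two_pow (lt_of_lt_of_le hp1 (Nat.pow_le_pow_right (by norm_num) (le_of_not_gt hi))),
          Nat.testBit_lt_two_pow (lt_of_lt_of_le hq1 (Nat.pow_le_pow_right (by norm_num) (le_of_not_gt hi)))]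
    have disj1 : ∀ i, p.1.testBit i = true → p.2.testBit i = false := by
      intro i h
      have : (p.1 &&& p.2).testBit i = false := by rw [hd1]; simp
      rw [Nat.testBit_and, h] at this; simpa using this
    have disj2 : ∀ i, q.1.testBit i = true → q.2.testBit i = false := by
      intro i h
      have : (q.1 &&& q.2).testBit i = false := by rw [hd2]; simp
      rw [Nat.testBit_and, h] at this; simpa using this
    have bit2 : ∀ i, p.2.testBit i = q.2.testBit i := by
      intro i
      by_cases hi : i < n
      · have hc := congrFun hfq ⟨i, hi⟩
        simp only at hc
        have hb := bit1 i
        by_cases a : p.1.testBit i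
        · rw [disj1 i a, disj2 i (hb ▸ a)]
        · have a' : q.1.testBit i = false := by rw [← hb]; simpa using a
          simp only [a', if_neg, Bool.not_eq_true] at hc
          simp only [(by simpa using a : p.1.testBit i = false), if_false] at hc
          by_cases b : p.2.testBit i <;> by_cases c : q.2.testBit i <;> simp_all
      · rw [Nat.testBit_lt_two_pow (lt_of_lt_of_le hp2 (Nat.pow_le_pow_right (by norm_num) (le_of_not_gt hi))),
          Nat.testBit_lt_two_pow (lt_of_lt_of_le hq2 (Nat.pow_le_pow_right (by norm_num) (le_of_not_gt hi)))]
    exact Prod.ext (Nat.eq_of_testBit_eq bit1) (Nat.eq_of_testBit_eq bit2)
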